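/- Let s ≥ 3 be a fixed integer and set β_s = ((s-1)/(s-2))·(1 - (1 - (s-2)/(s²-s))^{s-1}). Then for every ε > 0 there exists m_0 such that for all m ≥ m_0, with n = sm, one has 2^n - vex(n, K_{s×2}) ≤ Σ_{i=0}^{m-1} C(n,i) - (β_s - ε)·C(n, m-1). -/

import Mathlib

open Finset

/-- The family `F` of subsets of `[n]` contains a copy of the complete `s`-partite
graph `K_{s×t}` (all parts of size `t`) in the Kneser cube: there are `s·t` pairwise
distinct members `A j i ∈ F` such that sets belonging to different groups `j ≠ j'`
are disjoint. -/
def containsKst (n s t : ℕ) (F : Finset (Finset (Fin n))) : Prop :=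
  ∃ A : Fin s → Fin t → Finset (Fin n),
    (∀ j i, A j i ∈ F) ∧
    Function.Injective (fun p : Fin s × Fin t => A p.1 p.2) ∧
    ∀ j j' : Fin s, j ≠ j' → ∀ i i' : Fin t, Disjoint (A j i) (A j' i')

/-- `vexKst n s t` : the maximum size of a `K_{s×t}`-free family of subsets of `[n]`. -/
noncomputable def vexKst (n s t : ℕ) : ℕ :=
  sSup {k | ∃ F : Finset (Finset (Fin n)), ¬ containsKst n s t F ∧ F.card = k}


open Filter Topology

private lemma lin_ratio (a b c d : ℝ) (hc : c ≠ 0) :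
    Tendsto (fun m : ℕ => (a*m+b)/(c*m+d)) atTop (𝓝 (a/c)) := by
  have h1 : Tendsto (fun m : ℕ => (m:ℝ)) atTop atTop := tendsto_natCast_atTop_atTop
  have hb : Tendsto (fun m : ℕ => b/(m:ℝ)) atTop (𝓝 0) :=
    Tendsto.div_atTop tendsto_const_nhds h1
  have hd : Tendsto (fun m : ℕ => d/(m:ℝ)) atTop (𝓝 0) :=
    Tendsto.div_atTop tendsto_const_nhds h1
  have hnum : Tendsto (fun m : ℕ => a + b/(m:ℝ)) atTop (𝓝 a) := by
    simpa using tendsto_const_nhds.add hb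
  have hden : Tendsto (fun m : ℕ => c + d/(m:ℝ)) atTop (𝓝 c) := by
    simpa using tendsto_const_nhds.add hd
  have h := hnum.div hden hc
  apply h.congr'
  filter_upwards [eventually_gt_atTop 0] with m hm
  have hm' : (m:ℝ) ≠ 0 := by positivity
  rw [Pi.div_apply, show a*(m:ℝ)+b = (a+b/(m:ℝ))*(m:ℝ) by rw [add_mul, div_mul_cancel₀ _ hm'],
    show c*(m:ℝ)+d = (c+d/(m:ℝ))*(m:ℝ) by rw [add_mul, div_mul_cancel₀ _ hm'],
    mul_div_mul_right _ _ hm']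

private lemma T1 (s : ℕ) (hs : 3 ≤ s) (a : ℕ) :
    Tendsto (fun m : ℕ => (((s*m - a).choose (m-1) : ℕ) : ℝ) / (((s*m).choose (m-1) : ℕ) : ℝ))
      atTop (𝓝 ((((s:ℝ)-1)/s)^a)) := by
  induction a with
  | zero =>
    rw [pow_zero]
    apply tendsto_const_nhds.congr'
    filter_upwards [eventually_ge_atTop 1] with m hm
    have h3 : 3*m ≤ s*m := Nat.mul_le_mul_right m hs
    have h : m - 1 ≤ s * m := by omega
    have hne : (((s*m).choose (m-1) : ℕ) : ℝ) ≠ 0 := by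
      exact_mod_cast (Nat.choose_pos h).ne'
    simp [div_self hne]
  | succ a ih =>
    have hfac : Tendsto (fun m : ℕ => ((((s*m - a) - (m-1) : ℕ) : ℝ) / ((s*m - a : ℕ) : ℝ)))
        atTop (𝓝 (((s:ℝ)-1)/s)) := by
      have h := lin_ratio ((s:ℝ)-1) (1-(a:ℝ)) (s:ℝ) (-(a:ℝ))
        (Nat.cast_ne_zero.mpr (by omega))
      have hlim : ((s:ℝ)-1)/(s:ℝ) = ((s:ℝ)-1)/(s:ℝ) := rfl
      apply h.congr'
      filter_upwards [eventually_ge_atTop (a+2)] with m hm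
      have h3 : 3*m ≤ s*m := Nat.mul_le_mul_right m hs
      have h1 : a + (m-1) ≤ s*m := by omega
      have h2 : a ≤ s*m := by omega
      rw [Nat.sub_sub, Nat.cast_sub h1, Nat.cast_sub h2]
      push_cast [Nat.cast_sub (by omega : 1 ≤ m)]
      ring_nf
    have hmul := ih.mul hfac
    rw [← pow_succ] at hmul
    apply hmul.congr'
    filter_upwards [eventually_ge_atTop (a+2)] with m hm
    have h3 : 3*m ≤ s*m := Nat.mul_le_mul_right m hs
    -- key identity: (N-1).choose (m-1) * N = N.choose (m-1) * (N - (m-1)), N = s*m - a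
    have hN : 1 ≤ s*m - a := by omega
    have key := Nat.choose_mul_succ_eq (s*m - a - 1) (m-1)
    have hNe : s*m - a - 1 + 1 = s*m - a := by omega
    rw [hNe] at key
    -- key : (s*m-a-1).choose (m-1) * (s*m-a) = (s*m-a).choose (m-1) * (s*m-a - (m-1))
    have keyR : (((s*m - a - 1).choose (m-1) : ℕ) : ℝ) * ((s*m - a : ℕ) : ℝ)
        = (((s*m - a).choose (m-1) : ℕ) : ℝ) * (((s*m - a) - (m-1) : ℕ) : ℝ) := by
      exact_mod_cast congrArg (Nat.cast (R := ℝ)) key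
    have hNne : ((s*m - a : ℕ) : ℝ) ≠ 0 := by
      have : 0 < s*m - a := by omega
      exact_mod_cast this.ne'
    have hsub : s*m - (a+1) = s*m - a - 1 := by omega
    rw [hsub]
    have : (((s*m - a - 1).choose (m-1) : ℕ) : ℝ)
        = (((s*m - a).choose (m-1) : ℕ) : ℝ) * (((s*m - a) - (m-1) : ℕ) : ℝ) / ((s*m - a : ℕ) : ℝ) := by
      field_simp
      linarith [keyR]
    rw [this]
    ring

private lemma T2 (s : ℕ) (hs : 3 ≤ s) (a b : ℕ) :
    Tendsto (fun m : ℕ => (((s*m - a).choose (m-1-b) : ℕ) : ℝ) / (((s*m - a).choose (m-1) : ℕ) : ℝ))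
      atTop (𝓝 ((1/((s:ℝ)-1))^b)) := by
  induction b with
  | zero =>
    rw [pow_zero]
    apply tendsto_const_nhds.congr'
    filter_upwards [eventually_ge_atTop (a+1)] with m hm
    have h3 : 3*m ≤ s*m := Nat.mul_le_mul_right m hs
    have h : m - 1 ≤ s * m - a := by omega
    have hne : (((s*m - a).choose (m-1) : ℕ) : ℝ) ≠ 0 := by
      exact_mod_cast (Nat.choose_pos h).ne'
    simp [div_self hne]
  | succ b ih =>
    have hs1 : ((s:ℝ)-1) ≠ 0 := by
      have : (3:ℝ) ≤ s := by exact_mod_cast hs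
      linarith
    have hfac : Tendsto (fun m : ℕ => (((m-1-b : ℕ) : ℝ) / (((s*m - a) - (m-2-b) : ℕ) : ℝ)))
        atTop (𝓝 (1/((s:ℝ)-1))) := by
      have h := lin_ratio 1 (-(1:ℝ)-b) ((s:ℝ)-1) (2+(b:ℝ)-a) hs1
      rw [show (1:ℝ)/((s:ℝ)-1) = 1/((s:ℝ)-1) from rfl] at h
      apply h.congr'
      filter_upwards [eventually_ge_atTop (a+b+4)] with m hm
      have h3 : 3*m ≤ s*m := Nat.mul_le_mul_right m hs
      have h1 : 1 + b ≤ m - 1 := by omega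
      have h2 : m - 2 - b ≤ s*m - a := by omega
      rw [Nat.sub_sub m 1 b, Nat.cast_sub (by omega : 1 + b ≤ m),
        Nat.cast_sub h2, Nat.sub_sub m 2 b, Nat.cast_sub (by omega : a ≤ s*m),
        Nat.cast_sub (by omega : 2 + b ≤ m)]
      push_cast
      ring_nf
    have hmul := ih.mul hfac
    rw [← pow_succ] at hmul
    apply hmul.congr'
    filter_upwards [eventually_ge_atTop (a+b+4)] with m hm
    have h3 : 3*m ≤ s*m := Nat.mul_le_mul_right m hs
    have key := Nat.choose_succ_right_eq (s*m - a) (m-2-b)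
    have he : m - 2 - b + 1 = m - 1 - b := by omega
    rw [he] at key
    -- key : (s*m-a).choose (m-1-b) * (m-1-b) = (s*m-a).choose (m-2-b) * (s*m-a - (m-2-b))
    have keyR : (((s*m - a).choose (m-1-b) : ℕ) : ℝ) * ((m-1-b : ℕ) : ℝ)
        = (((s*m - a).choose (m-2-b) : ℕ) : ℝ) * (((s*m - a) - (m-2-b) : ℕ) : ℝ) := by
      exact_mod_cast congrArg (Nat.cast (R := ℝ)) key
    have hDne : (((s*m - a) - (m-2-b) : ℕ) : ℝ) ≠ 0 := by
      have : 0 < (s*m - a) - (m-2-b) := by omega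
      exact_mod_cast this.ne'
    have hsub : m - 1 - (b+1) = m - 2 - b := by omega
    rw [hsub]
    have hrep : (((s*m - a).choose (m-2-b) : ℕ) : ℝ)
        = (((s*m - a).choose (m-1-b) : ℕ) : ℝ) * ((m-1-b : ℕ) : ℝ) / (((s*m - a) - (m-2-b) : ℕ) : ℝ) := by
      field_simp
      linarith [keyR]
    rw [hrep]
    ring

private lemma limit_id (s : ℕ) (hs : 3 ≤ s) :
    ∑ i ∈ range (s-1), ∑ k ∈ Icc (i+1) (s-1),
        ((s-1).choose k : ℝ) * ((((s:ℝ)-1)/s)^(s-1) * (1/((s:ℝ)-1))^(i+k))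
      = ((s:ℝ)-1)/((s:ℝ)-2) * (1 - (1 - ((s:ℝ)-2)/((s:ℝ)^2 - s))^(s-1)) := by
  obtain ⟨s₁, rfl⟩ : ∃ s₁, s = s₁ + 1 := ⟨s-1, by omega⟩
  have hs₁ : 2 ≤ s₁ := by omega
  have hcast : (((s₁+1 : ℕ)) : ℝ) = (s₁:ℝ) + 1 := by push_cast; ring
  rw [Nat.add_sub_cancel, hcast]
  have hr2 : (2:ℝ) ≤ (s₁:ℝ) := by exact_mod_cast hs₁
  set R : ℝ := (s₁:ℝ) + 1 - 1 with hRdef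
  have hR : R = (s₁:ℝ) := by rw [hRdef]; ring
  have hrne : R ≠ 0 := by rw [hR]; linarith
  have hsne : ((s₁:ℝ)+1) ≠ 0 := by positivity
  set c : ℝ := R/((s₁:ℝ)+1) with hc
  set u : ℝ := 1/R with hu
  have hune : u ≠ 1 := by
    rw [hu, hR]
    intro h
    rw [div_eq_one_iff_eq (by linarith : (s₁:ℝ) ≠ 0)] at h
    linarith
  have hu2 : u - 1 ≠ 0 := fun h => hune (by linarith)
  have hb1 : ∑ k ∈ range (s₁+1), (s₁.choose k : ℝ) * (c^s₁ * u^k) = 1 := by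
    have hap := add_pow (1/((s₁:ℝ)+1)) c s₁
    have h1 : (1/((s₁:ℝ)+1) + c) = 1 := by
      rw [hc, hR]; field_simp; ring
    rw [h1, one_pow] at hap
    have hterm : ∀ k ∈ range (s₁+1), (1/((s₁:ℝ)+1)) ^ k * c ^ (s₁ - k) * (s₁.choose k : ℝ)
        = (s₁.choose k : ℝ) * (c^s₁ * u^k) := by
      intro k hk
      have hk' : k ≤ s₁ := by simpa [Nat.lt_succ_iff] using hk
      have e1 : c^s₁ = c^k * c^(s₁-k) := by rw [← pow_add]; congr 1; omega
      have e2 : c^k * u^k = (1/((s₁:ℝ)+1))^k := by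
        rw [← mul_pow]; congr 1; rw [hc, hu]; field_simp
      rw [e1, show (s₁.choose k : ℝ) * (c ^ k * c ^ (s₁ - k) * u ^ k)
          = (c^k * u^k) * c^(s₁-k) * (s₁.choose k : ℝ) by ring, e2]
    rw [hap, Finset.sum_congr rfl hterm]
  have hb2 : ∑ k ∈ range (s₁+1), (s₁.choose k : ℝ) * (c^s₁ * (u^k)^2)
      = (1/(R*((s₁:ℝ)+1)) + c)^s₁ := by
    have hap := add_pow (1/(R*((s₁:ℝ)+1))) c s₁
    have hterm : ∀ k ∈ range (s₁+1), (1/(R*((s₁:ℝ)+1))) ^ k * c ^ (s₁ - k) * (s₁.choose k : ℝ)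
        = (s₁.choose k : ℝ) * (c^s₁ * (u^k)^2) := by
      intro k hk
      have hk' : k ≤ s₁ := by simpa [Nat.lt_succ_iff] using hk
      have e1 : c^s₁ = c^k * c^(s₁-k) := by rw [← pow_add]; congr 1; omega
      have e2 : c^k * (u^k)^2 = (1/(R*((s₁:ℝ)+1)))^k := by
        have h3 : (u^k)^2 = (u^2)^k := by rw [← pow_mul, ← pow_mul, mul_comm]
        rw [h3, ← mul_pow]; congr 1; rw [hc, hu]; field_simp
      rw [e1, show (s₁.choose k : ℝ) * (c ^ k * c ^ (s₁ - k) * (u^k)^2)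
          = (c^k * (u^k)^2) * c^(s₁-k) * (s₁.choose k : ℝ) by ring, e2]
    rw [hap, Finset.sum_congr rfl hterm]
  -- swap the double sum
  have hswap : ∑ i ∈ range s₁, ∑ k ∈ Icc (i+1) s₁,
      (s₁.choose k : ℝ) * (c^s₁ * u^(i+k))
      = ∑ k ∈ Icc 1 s₁, ∑ i ∈ range k, (s₁.choose k : ℝ) * (c^s₁ * u^(i+k)) := by
    apply Finset.sum_comm'
    intro i k
    simp only [mem_range, mem_Icc]
    omega
  have hgeom : ∀ k : ℕ, ∑ i ∈ range k, (s₁.choose k : ℝ) * (c^s₁ * u^(i+k))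
      = (s₁.choose k : ℝ) * c^s₁ * u^k * ((u^k - 1)/(u-1)) := by
    intro k
    have : ∀ i, (s₁.choose k : ℝ) * (c^s₁ * u^(i+k))
        = ((s₁.choose k : ℝ) * c^s₁ * u^k) * u^i := by
      intro i; rw [pow_add]; ring
    rw [Finset.sum_congr rfl (fun i _ => this i), ← Finset.mul_sum,
      geom_sum_eq hune]
  have hins : range (s₁+1) = insert 0 (Icc 1 s₁) := by
    ext x; simp [mem_range, mem_Icc, Nat.lt_succ_iff]; omega
  have hsplit : ∀ (g : ℕ → ℝ), g 0 = 0 →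
      ∑ k ∈ Icc 1 s₁, g k = ∑ k ∈ range (s₁+1), g k := by
    intro g hg
    rw [hins, Finset.sum_insert (by simp), hg, zero_add]
  calc ∑ i ∈ range s₁, ∑ k ∈ Icc (i+1) s₁,
      (s₁.choose k : ℝ) * (c^s₁ * u^(i+k))
      = ∑ k ∈ Icc 1 s₁, (s₁.choose k : ℝ) * c^s₁ * u^k * ((u^k - 1)/(u-1)) := by
        rw [hswap]; exact Finset.sum_congr rfl (fun k _ => hgeom k)
    _ = ∑ k ∈ Icc 1 s₁, ((s₁.choose k : ℝ) * (c^s₁ * (u^k)^2)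
          - (s₁.choose k : ℝ) * (c^s₁ * u^k)) * (1/(u-1)) := by
        apply Finset.sum_congr rfl
        intro k _
        field_simp
    _ = ((∑ k ∈ range (s₁+1), (s₁.choose k : ℝ) * (c^s₁ * (u^k)^2))
          - (∑ k ∈ range (s₁+1), (s₁.choose k : ℝ) * (c^s₁ * u^k))) * (1/(u-1)) := by
        rw [← Finset.sum_mul, ← Finset.sum_sub_distrib]
        congr 1
        apply hsplit
        simp
    _ = ((1/(R*((s₁:ℝ)+1)) + c)^s₁ - 1) * (1/(u-1)) := by rw [hb1, hb2]
    _ = ((s₁:ℝ)+1-1)/((s₁:ℝ)+1-2) * (1 - (1 - ((s₁:ℝ)+1-2)/(((s₁:ℝ)+1)^2 - ((s₁:ℝ)+1)))^s₁) := by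
        have hbase : 1/(R*((s₁:ℝ)+1)) + c
            = 1 - ((s₁:ℝ)+1-2)/(((s₁:ℝ)+1)^2 - ((s₁:ℝ)+1)) := by
          rw [hc, hR]
          have h1 : (s₁:ℝ) ≠ 0 := by linarith
          have h2 : ((s₁:ℝ)+1)^2 - ((s₁:ℝ)+1) ≠ 0 := by
            have : ((s₁:ℝ)+1)^2 - ((s₁:ℝ)+1) = (s₁:ℝ)*((s₁:ℝ)+1) := by ring
            rw [this]; positivity
          field_simp
          ring_nf
          field_simp
          ring
        rw [hbase]
        have h4 : (s₁:ℝ) ≠ 0 := by linarith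
        have h1 : u - 1 = (1 - (s₁:ℝ))/(s₁:ℝ) := by
          rw [hu, hR]; field_simp
        rw [h1, show ((s₁:ℝ)+1-1) = (s₁:ℝ) from by ring, show ((s₁:ℝ)+1-2) = (s₁:ℝ)-1 from by ring]
        generalize (1 - ((s₁:ℝ)-1)/(((s₁:ℝ)+1)^2 - ((s₁:ℝ)+1)))^s₁ = B
        rw [one_div_div, show (1:ℝ)-(s₁:ℝ) = -((s₁:ℝ)-1) from by ring, div_neg]
        ring

private lemma cardT (n k : ℕ) (h : k ≤ n) :
    ((univ : Finset (Fin n)).filter (fun x => x.val < k)).card = k := by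
  have e : ((univ : Finset (Fin n)).filter (fun x => x.val < k)).card = (Finset.range k).card := by
    apply Finset.card_bij (fun (x : Fin n) _ => (x:ℕ))
    · intro a ha
      simp only [mem_filter] at ha
      simp [Finset.mem_range, ha.2]
    · intro a ha b hb hab
      exact Fin.val_injective hab
    · intro b hb
      simp only [Finset.mem_range] at hb
      exact ⟨⟨b, lt_of_lt_of_le hb h⟩, by simp [hb], rfl⟩
  rw [e, Finset.card_range]

private lemma free_lemma (s m : ℕ) (hs : 3 ≤ s) (hm : 1 ≤ m) :
    ¬ containsKst (s*m) s 2 ((univ : Finset (Finset (Fin (s*m)))).filter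
      (fun Z => m ≤ Z.card + (Z ∩ ((univ : Finset (Fin (s*m))).filter
        (fun x => x.val < s-1))).card)) := by
  set T : Finset (Fin (s*m)) := (univ : Finset (Fin (s*m))).filter (fun x => x.val < s-1) with hT
  have h3 : 3*m ≤ s*m := Nat.mul_le_mul_right m hs
  have h4 : s ≤ s*m := Nat.le_mul_of_pos_right s hm
  have hTcard : T.card = s - 1 := cardT (s*m) (s-1) (by omega)
  rintro ⟨A, hmem, hinj, hdisj⟩
  have hudisj : ∀ j j' : Fin s, j ≠ j' → Disjoint (A j 0 ∪ A j 1) (A j' 0 ∪ A j' 1) := by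
    intro j j' hjj'
    exact Finset.disjoint_union_left.mpr
      ⟨Finset.disjoint_union_right.mpr ⟨hdisj j j' hjj' 0 0, hdisj j j' hjj' 0 1⟩,
       Finset.disjoint_union_right.mpr ⟨hdisj j j' hjj' 1 0, hdisj j j' hjj' 1 1⟩⟩
  have hprop : ∀ j i, m ≤ (A j i).card + ((A j i) ∩ T).card := by
    intro j i
    have := hmem j i
    rw [Finset.mem_filter] at this
    exact this.2
  have hgroup : ∀ j : Fin s, m + 1 ≤ (A j 0 ∪ A j 1).card + ((A j 0 ∪ A j 1) ∩ T).card := by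
    intro j
    have hne : A j 0 ≠ A j 1 := by
      intro h
      have := hinj (a₁ := (j,0)) (a₂ := (j,1)) h
      simp at this
    have key : ∃ i : Fin 2, A j i ⊂ A j 0 ∪ A j 1 := by
      by_cases h01 : A j 1 ⊆ A j 0
      · have hU : A j 0 ∪ A j 1 = A j 0 := Finset.union_eq_left.mpr h01
        exact ⟨1, by rw [hU]; exact HasSubset.Subset.ssubset_of_ne h01 (fun h => hne h.symm)⟩
      · refine ⟨0, Finset.ssubset_iff_subset_ne.mpr ⟨Finset.subset_union_left, fun h => h01 ?_⟩⟩
        rw [h]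
        exact Finset.subset_union_right
    obtain ⟨i, hi⟩ := key
    have h1 : (A j i).card + 1 ≤ (A j 0 ∪ A j 1).card := Finset.card_lt_card hi
    have h2 : ((A j i) ∩ T).card ≤ ((A j 0 ∪ A j 1) ∩ T).card :=
      Finset.card_le_card (Finset.inter_subset_inter hi.subset le_rfl)
    have := hprop j i
    omega
  have hsum1 : ∑ j : Fin s, (A j 0 ∪ A j 1).card ≤ s*m := by
    rw [← Finset.card_biUnion (fun j _ j' _ h => hudisj j j' h)]
    have := Finset.card_le_univ ((univ : Finset (Fin s)).biUnion (fun j => A j 0 ∪ A j 1))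
    simpa using this
  have hsum2 : ∑ j : Fin s, ((A j 0 ∪ A j 1) ∩ T).card ≤ s - 1 := by
    rw [← hTcard, ← Finset.card_biUnion]
    · apply Finset.card_le_card
      intro x hx
      simp only [Finset.mem_biUnion] at hx
      obtain ⟨j, _, hj⟩ := hx
      exact (Finset.mem_inter.mp hj).2
    · intro j _ j' _ h
      exact Finset.disjoint_of_subset_left Finset.inter_subset_left
        (Finset.disjoint_of_subset_right Finset.inter_subset_left (hudisj j j' h))
  have htot : ∑ j : Fin s, (m+1) ≤ ∑ j : Fin s, ((A j 0 ∪ A j 1).card + ((A j 0 ∪ A j 1) ∩ T).card) :=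
    Finset.sum_le_sum (fun j _ => hgroup j)
  rw [Finset.sum_const, Finset.sum_add_distrib] at htot
  simp only [Finset.card_univ, Fintype.card_fin, smul_eq_mul] at htot
  have hexp : s * (m+1) = s*m + s := by ring
  omega

private lemma cardG (n : ℕ) (T : Finset (Fin n)) (c k : ℕ) (hk : k ≤ c) :
    ((univ : Finset (Finset (Fin n))).filter (fun Z => Z.card = c ∧ (Z ∩ T).card = k)).card
      = T.card.choose k * ((n - T.card).choose (c - k)) := by
  have e : ((univ : Finset (Finset (Fin n))).filter (fun Z => Z.card = c ∧ (Z ∩ T).card = k)).card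
      = ((Finset.powersetCard k T) ×ˢ (Finset.powersetCard (c-k) Tᶜ)).card := by
    apply Finset.card_bij' (fun Z _ => (Z ∩ T, Z \ T)) (fun p _ => p.1 ∪ p.2)
    · intro Z hZ
      simp only [Finset.mem_filter] at hZ
      obtain ⟨-, hc, hik⟩ := hZ
      rw [Finset.mem_product]
      constructor
      · rw [Finset.mem_powersetCard]
        exact ⟨Finset.inter_subset_right, hik⟩
      · rw [Finset.mem_powersetCard]
        constructor
        · intro x hx
          rw [Finset.mem_compl]
          exact (Finset.mem_sdiff.mp hx).2
        · show (Z \ T).card = c - k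
          have := Finset.card_sdiff_add_card_inter Z T
          omega
    · intro p hp
      rw [Finset.mem_product, Finset.mem_powersetCard, Finset.mem_powersetCard] at hp
      obtain ⟨⟨h1s, h1c⟩, ⟨h2s, h2c⟩⟩ := hp
      have hdisj : Disjoint p.1 p.2 := by
        rw [Finset.disjoint_left]
        intro x hx1 hx2
        exact (Finset.mem_compl.mp (h2s hx2)) (h1s hx1)
      have hint : (p.1 ∪ p.2) ∩ T = p.1 := by
        ext x
        simp only [Finset.mem_inter, Finset.mem_union]
        constructor
        · rintro ⟨hx1 | hx2, hxT⟩
          · exact hx1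
          · exact absurd hxT (Finset.mem_compl.mp (h2s hx2))
        · intro hx
          exact ⟨Or.inl hx, h1s hx⟩
      rw [Finset.mem_filter]
      refine ⟨Finset.mem_univ _, ?_, ?_⟩
      · rw [Finset.card_union_of_disjoint hdisj]
        omega
      · rw [hint, h1c]
    · intro Z hZ
      rw [Finset.union_comm, Finset.sdiff_union_inter]
    · intro p hp
      rw [Finset.mem_product, Finset.mem_powersetCard, Finset.mem_powersetCard] at hp
      obtain ⟨⟨h1s, h1c⟩, ⟨h2s, h2c⟩⟩ := hp
      have hint : (p.1 ∪ p.2) ∩ T = p.1 := by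
        ext x
        simp only [Finset.mem_inter, Finset.mem_union]
        constructor
        · rintro ⟨hx1 | hx2, hxT⟩
          · exact hx1
          · exact absurd hxT (Finset.mem_compl.mp (h2s hx2))
        · intro hx
          exact ⟨Or.inl hx, h1s hx⟩
      have hsd : (p.1 ∪ p.2) \ T = p.2 := by
        ext x
        simp only [Finset.mem_sdiff, Finset.mem_union]
        constructor
        · rintro ⟨hx1 | hx2, hxT⟩
          · exact absurd (h1s hx1) hxT
          · exact hx2
        · intro hx
          exact ⟨Or.inr hx, Finset.mem_compl.mp (h2s hx)⟩
      rw [hint, hsd]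
  rw [e, Finset.card_product, Finset.card_powersetCard, Finset.card_powersetCard,
    Finset.card_compl, Fintype.card_fin]

private lemma card_F_ge (s m : ℕ) (hs : 3 ≤ s) (hm : 3*s + 3 ≤ m) :
    2^(s*m) + ∑ i ∈ range (s-1), ∑ k ∈ Icc (i+1) (s-1),
        (s-1).choose k * ((s*m - (s-1)).choose (m-1-(i+k)))
      ≤ (((univ : Finset (Finset (Fin (s*m)))).filter
          (fun Z => m ≤ Z.card + (Z ∩ ((univ : Finset (Fin (s*m))).filter
            (fun x => x.val < s-1))).card)).card)
        + ∑ c ∈ range m, (s*m).choose c := by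
  have h3 : 3*m ≤ s*m := Nat.mul_le_mul_right m hs
  have h4 : s ≤ s*m := Nat.le_mul_of_pos_right s (by omega)
  set T : Finset (Fin (s*m)) := (univ : Finset (Fin (s*m))).filter (fun x => x.val < s-1) with hT
  have hTcard : T.card = s - 1 := cardT (s*m) (s-1) (by omega)
  set F : Finset (Finset (Fin (s*m))) := (univ : Finset (Finset (Fin (s*m)))).filter
      (fun Z => m ≤ Z.card + (Z ∩ T).card) with hF
  set Fbig : Finset (Finset (Fin (s*m))) := (univ : Finset (Finset (Fin (s*m)))).filter
      (fun Z => m ≤ Z.card) with hFbig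
  have hlevel : ∀ c, ((univ : Finset (Finset (Fin (s*m)))).filter
      (fun Z => Z.card = c)).card = (s*m).choose c := by
    intro c
    have e1 : (univ : Finset (Finset (Fin (s*m)))).filter (fun Z => Z.card = c)
        = Finset.powersetCard c (univ : Finset (Fin (s*m))) := by
      rw [Finset.powersetCard_eq_filter, Finset.powerset_univ]
    rw [e1, Finset.card_powersetCard, Finset.card_univ, Fintype.card_fin]
  -- 2^n ≤ |Fbig| + ∑_{c<m} C(n,c)
  have h2n : 2^(s*m) ≤ Fbig.card + ∑ c ∈ range m, (s*m).choose c := by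
    have hu : (univ : Finset (Finset (Fin (s*m)))).card = 2^(s*m) := by
      rw [Finset.card_univ, Fintype.card_finset, Fintype.card_fin]
    have hpart : ((univ : Finset (Finset (Fin (s*m)))).filter (fun Z => m ≤ Z.card)).card
        + ((univ : Finset (Finset (Fin (s*m)))).filter (fun Z => ¬ m ≤ Z.card)).card = 2^(s*m) := by
      rw [Finset.card_filter_add_card_filter_not, hu]
    have hbigeq : Fbig.card = ((univ : Finset (Finset (Fin (s*m)))).filter
        (fun Z => m ≤ Z.card)).card := rfl
    have hsmall : ((univ : Finset (Finset (Fin (s*m)))).filter (fun Z => ¬ m ≤ Z.card)).card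
        ≤ ∑ c ∈ range m, (s*m).choose c := by
      have hsub : (univ : Finset (Finset (Fin (s*m)))).filter (fun Z => ¬ m ≤ Z.card)
          ⊆ (range m).biUnion (fun c => (univ : Finset (Finset (Fin (s*m)))).filter
              (fun Z => Z.card = c)) := by
        intro Z hZ
        rw [Finset.mem_filter] at hZ
        rw [Finset.mem_biUnion]
        exact ⟨Z.card, Finset.mem_range.mpr (by omega), by simp⟩
      calc _ ≤ _ := Finset.card_le_card hsub
        _ ≤ ∑ c ∈ range m, ((univ : Finset (Finset (Fin (s*m)))).filter
              (fun Z => Z.card = c)).card := Finset.card_biUnion_le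
        _ = ∑ c ∈ range m, (s*m).choose c := Finset.sum_congr rfl (fun c _ => hlevel c)
    omega
  -- the added levels
  set G : ℕ → ℕ → Finset (Finset (Fin (s*m))) := fun i k =>
    (univ : Finset (Finset (Fin (s*m)))).filter
      (fun Z => Z.card = m-1-i ∧ (Z ∩ T).card = k) with hG
  set Added : Finset (Finset (Fin (s*m))) :=
    (range (s-1)).biUnion (fun i => (Icc (i+1) (s-1)).biUnion (fun k => G i k)) with hAdded
  have hGcard : ∀ i ∈ range (s-1), ∀ k ∈ Icc (i+1) (s-1),
      (G i k).card = (s-1).choose k * ((s*m - (s-1)).choose (m-1-(i+k))) := by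
    intro i hi k hk
    rw [Finset.mem_range] at hi
    rw [Finset.mem_Icc] at hk
    have hkc : k ≤ m-1-i := by omega
    have := cardG (s*m) T (m-1-i) k hkc
    rw [hG]
    simp only []
    rw [this, hTcard]
    congr 1
    congr 1
    omega
  have hAddedCard : Added.card = ∑ i ∈ range (s-1), ∑ k ∈ Icc (i+1) (s-1),
      (s-1).choose k * ((s*m - (s-1)).choose (m-1-(i+k))) := by
    rw [hAdded, Finset.card_biUnion]
    · apply Finset.sum_congr rfl
      intro i hi
      rw [Finset.card_biUnion]
      · exact Finset.sum_congr rfl (fun k hk => hGcard i hi k hk)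
      · intro k _ k' _ hkk'
        simp only [Function.onFun]
        rw [Finset.disjoint_left]
        intro Z hZ hZ'
        rw [hG] at hZ hZ'
        simp only [Finset.mem_filter] at hZ hZ'
        exact hkk' (hZ.2.2 ▸ hZ'.2.2)
    · intro i hi i' hi' hii'
      simp only [Function.onFun]
      simp only [Finset.mem_coe, Finset.mem_range] at hi hi'
      rw [Finset.disjoint_left]
      intro Z hZ hZ'
      rw [Finset.mem_biUnion] at hZ hZ'
      obtain ⟨k, -, hZk⟩ := hZ
      obtain ⟨k', -, hZk'⟩ := hZ'
      rw [hG] at hZk hZk'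
      simp only [Finset.mem_filter] at hZk hZk'
      have e1 := hZk.2.1
      have e2 := hZk'.2.1
      apply hii'
      have : m-1-i = m-1-i' := e1 ▸ e2
      omega
  have hdisjBA : Disjoint Fbig Added := by
    rw [Finset.disjoint_left]
    intro Z hZ hZ'
    rw [hFbig, Finset.mem_filter] at hZ
    rw [hAdded, Finset.mem_biUnion] at hZ'
    obtain ⟨i, -, hZ'⟩ := hZ'
    rw [Finset.mem_biUnion] at hZ'
    obtain ⟨k, -, hZk⟩ := hZ'
    rw [hG] at hZk
    simp only [Finset.mem_filter] at hZk
    have := hZk.2.1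
    omega
  have hsubF : Fbig ∪ Added ⊆ F := by
    intro Z hZ
    rw [Finset.mem_union] at hZ
    rw [hF, Finset.mem_filter]
    refine ⟨Finset.mem_univ _, ?_⟩
    rcases hZ with hZ | hZ
    · rw [hFbig, Finset.mem_filter] at hZ
      omega
    · rw [hAdded, Finset.mem_biUnion] at hZ
      obtain ⟨i, hi, hZ⟩ := hZ
      rw [Finset.mem_biUnion] at hZ
      obtain ⟨k, hk, hZk⟩ := hZ
      rw [Finset.mem_range] at hi
      rw [Finset.mem_Icc] at hk
      rw [hG] at hZk
      simp only [Finset.mem_filter] at hZk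
      have e1 := hZk.2.1
      have e2 := hZk.2.2
      omega
  have hcard : Fbig.card + Added.card ≤ F.card := by
    rw [← Finset.card_union_of_disjoint hdisjBA]
    exact Finset.card_le_card hsubF
  omega

private lemma ratio_tendsto (s : ℕ) (hs : 3 ≤ s) (j : ℕ) :
    Tendsto (fun m : ℕ => (((s*m - (s-1)).choose (m-1-j) : ℕ) : ℝ) / (((s*m).choose (m-1) : ℕ) : ℝ))
      atTop (𝓝 ((((s:ℝ)-1)/s)^(s-1) * (1/((s:ℝ)-1))^j)) := by
  have h := (T2 s hs (s-1) j).mul (T1 s hs (s-1))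
  rw [mul_comm] at h
  apply h.congr'
  filter_upwards [eventually_ge_atTop (s+j+5)] with m hm
  have h3 : 3*m ≤ s*m := Nat.mul_le_mul_right m hs
  have hne : (((s*m - (s-1)).choose (m-1) : ℕ) : ℝ) ≠ 0 := by
    have : m - 1 ≤ s*m - (s-1) := by omega
    exact_mod_cast (Nat.choose_pos this).ne'
  rw [div_mul_div_comm]
  rw [mul_comm (((s*m - (s-1)).choose (m-1-j) : ℕ) : ℝ) (((s*m - (s-1)).choose (m-1) : ℕ) : ℝ),
    mul_div_mul_left _ _ hne]

private lemma sum_tendsto (s : ℕ) (hs : 3 ≤ s) :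
    Tendsto (fun m : ℕ => ∑ i ∈ range (s-1), ∑ k ∈ Icc (i+1) (s-1),
        ((s-1).choose k : ℝ) * ((((s*m - (s-1)).choose (m-1-(i+k)) : ℕ) : ℝ)
          / (((s*m).choose (m-1) : ℕ) : ℝ)))
      atTop (𝓝 (((s:ℝ)-1)/((s:ℝ)-2) * (1 - (1 - ((s:ℝ)-2)/((s:ℝ)^2 - s))^(s-1)))) := by
  have hlim : Tendsto (fun m : ℕ => ∑ i ∈ range (s-1), ∑ k ∈ Icc (i+1) (s-1),
      ((s-1).choose k : ℝ) * ((((s*m - (s-1)).choose (m-1-(i+k)) : ℕ) : ℝ)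
        / (((s*m).choose (m-1) : ℕ) : ℝ)))
      atTop (𝓝 (∑ i ∈ range (s-1), ∑ k ∈ Icc (i+1) (s-1),
        ((s-1).choose k : ℝ) * ((((s:ℝ)-1)/s)^(s-1) * (1/((s:ℝ)-1))^(i+k)))) := by
    apply tendsto_finset_sum
    intro i _
    apply tendsto_finset_sum
    intro k _
    exact (ratio_tendsto s hs (i+k)).const_mul _
  have hid : ∑ i ∈ range (s-1), ∑ k ∈ Icc (i+1) (s-1),
      ((s-1).choose k : ℝ) * ((((s:ℝ)-1)/s)^(s-1) * (1/((s:ℝ)-1))^(i+k))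
      = ((s:ℝ)-1)/((s:ℝ)-2) * (1 - (1 - ((s:ℝ)-2)/((s:ℝ)^2 - s))^(s-1)) := by
    exact limit_id s hs
  rw [hid] at hlim
  exact hlim

/-- for fixed `s ≥ 3`, `n = sm` and
`β_s = ((s-1)/(s-2))·(1 - (1 - (s-2)/(s²-s))^{s-1})`, for every `ε > 0` and all
sufficiently large `m`,
`2^n - vex(n, K_{s×2}) ≤ Σ_{i=0}^{m-1} C(n,i) - (β_s - ε)·C(n, m-1)`. -/
theorem stmt6 (s : ℕ) (hs : 3 ≤ s) :
    ∀ ε : ℝ, 0 < ε → ∃ m₀ : ℕ, ∀ m : ℕ, m₀ ≤ m →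
      (2 : ℝ) ^ (s * m) - (vexKst (s * m) s 2 : ℝ) ≤
        (∑ i ∈ Finset.range m, ((s * m).choose i : ℝ)) -
          (((s : ℝ) - 1) / ((s : ℝ) - 2) *
              (1 - (1 - ((s : ℝ) - 2) / ((s : ℝ) ^ 2 - s)) ^ (s - 1)) - ε) *
            ((s * m).choose (m - 1) : ℝ) := by
  intro ε hε
  set β : ℝ := ((s:ℝ)-1)/((s:ℝ)-2) * (1 - (1 - ((s:ℝ)-2)/((s:ℝ)^2 - s))^(s-1)) with hβ
  have hev1 : ∀ᶠ m : ℕ in atTop, β - ε ≤ ∑ i ∈ range (s-1), ∑ k ∈ Icc (i+1) (s-1),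
      ((s-1).choose k : ℝ) * ((((s*m - (s-1)).choose (m-1-(i+k)) : ℕ) : ℝ)
        / (((s*m).choose (m-1) : ℕ) : ℝ)) :=
    (sum_tendsto s hs).eventually_const_le (by linarith)
  have hev : ∀ᶠ m : ℕ in atTop, (β - ε ≤ ∑ i ∈ range (s-1), ∑ k ∈ Icc (i+1) (s-1),
      ((s-1).choose k : ℝ) * ((((s*m - (s-1)).choose (m-1-(i+k)) : ℕ) : ℝ)
        / (((s*m).choose (m-1) : ℕ) : ℝ))) ∧ 3*s + 3 ≤ m :=
    hev1.and (eventually_ge_atTop (3*s+3))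
  rw [eventually_atTop] at hev
  obtain ⟨m₀, hm₀⟩ := hev
  refine ⟨m₀, fun m hm => ?_⟩
  obtain ⟨hSm, hm3⟩ := hm₀ m hm
  have h3 : 3*m ≤ s*m := Nat.mul_le_mul_right m hs
  -- the free family
  set F : Finset (Finset (Fin (s*m))) := (univ : Finset (Finset (Fin (s*m)))).filter
      (fun Z => m ≤ Z.card + (Z ∩ ((univ : Finset (Fin (s*m))).filter
        (fun x => x.val < s-1))).card) with hF
  have hfree : ¬ containsKst (s*m) s 2 F := free_lemma s m hs (by omega)
  have hvex : F.card ≤ vexKst (s*m) s 2 := by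
    apply le_csSup
    · refine ⟨2^(s*m), ?_⟩
      rintro k ⟨F', -, rfl⟩
      calc F'.card ≤ (univ : Finset (Finset (Fin (s*m)))).card := Finset.card_le_univ F'
        _ = 2^(s*m) := by rw [Finset.card_univ, Fintype.card_finset, Fintype.card_fin]
    · exact ⟨F, hfree, rfl⟩
  -- counting
  have hcount := card_F_ge s m hs hm3
  -- cast to ℝ
  have hC0 : (0:ℝ) < (((s*m).choose (m-1) : ℕ) : ℝ) := by
    have : m - 1 ≤ s*m := by omega
    exact_mod_cast Nat.choose_pos this
  set C : ℝ := (((s*m).choose (m-1) : ℕ) : ℝ) with hC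
  have hAddedR : (((∑ i ∈ range (s-1), ∑ k ∈ Icc (i+1) (s-1),
      (s-1).choose k * ((s*m - (s-1)).choose (m-1-(i+k)))) : ℕ) : ℝ)
      = (∑ i ∈ range (s-1), ∑ k ∈ Icc (i+1) (s-1),
        ((s-1).choose k : ℝ) * ((((s*m - (s-1)).choose (m-1-(i+k)) : ℕ) : ℝ) / C)) * C := by
    rw [Finset.sum_mul]
    push_cast
    apply Finset.sum_congr rfl
    intro i _
    rw [Finset.sum_mul]
    apply Finset.sum_congr rfl
    intro k _
    rw [mul_assoc, div_mul_cancel₀ _ hC0.ne']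
  have hAdded_ge : (((∑ i ∈ range (s-1), ∑ k ∈ Icc (i+1) (s-1),
      (s-1).choose k * ((s*m - (s-1)).choose (m-1-(i+k)))) : ℕ) : ℝ) ≥ (β - ε) * C := by
    rw [hAddedR]
    exact mul_le_mul_of_nonneg_right hSm (le_of_lt hC0)
  have hcountR : (2:ℝ)^(s*m) + (((∑ i ∈ range (s-1), ∑ k ∈ Icc (i+1) (s-1),
      (s-1).choose k * ((s*m - (s-1)).choose (m-1-(i+k)))) : ℕ) : ℝ)
      ≤ (F.card : ℝ) + ∑ c ∈ range m, (((s*m).choose c : ℕ) : ℝ) := by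
    exact_mod_cast hcount
  have hvexR : (F.card : ℝ) ≤ (vexKst (s*m) s 2 : ℝ) := by exact_mod_cast hvex
  have hgoal : (2:ℝ)^(s*m) - (vexKst (s*m) s 2 : ℝ)
      ≤ (∑ c ∈ range m, (((s*m).choose c : ℕ) : ℝ)) - (β - ε) * C := by
    linarith
  exact hgoal
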